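/- Let S be a finite set, let f : 2^S → ℝ be a normalized monotone submodular function, and let g : 2^S → ℝ be any set function such that { x ∈ ℝ^S : x ≥ 0 componentwise and x(B) ≤ g(B) for all B ⊆ S } = P_f. Then g(A) ≥ f(A) for every A ⊆ S. -/

import Mathlib

open Finset

private lemma telescope_aux {ι : Type*} [DecidableEq ι] [LinearOrder ι] (f : Finset ι → ℝ)
    (C : Finset ι) :
    ∑ i ∈ C, (f (C.filter (· ≤ i)) - f (C.filter (· < i))) = f C - f ∅ := by
  induction C using Finset.induction_on_max with
  | empty => simp
  | insert a s ha ih =>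
    have has : a ∉ s := fun h => lt_irrefl a (ha a h)
    rw [Finset.sum_insert has]
    have h1 : (insert a s).filter (· ≤ a) = insert a s := by
      apply Finset.filter_true_of_mem
      intro x hx
      rcases Finset.mem_insert.1 hx with h | h
      · exact le_of_eq h
      · exact (ha x h).le
    have h2 : (insert a s).filter (· < a) = s := by
      ext x
      simp only [Finset.mem_filter, Finset.mem_insert]
      constructor
      · rintro ⟨h | h, hlt⟩
        · exact absurd hlt (by simp [h])
        · exact h
      · exact fun h => ⟨Or.inr h, ha x h⟩
    have h3 : ∀ i ∈ s, (insert a s).filter (· ≤ i) = s.filter (· ≤ i) := by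
      intro i hi
      rw [Finset.filter_insert, if_neg (not_le.2 (ha i hi))]
    have h4 : ∀ i ∈ s, (insert a s).filter (· < i) = s.filter (· < i) := by
      intro i hi
      rw [Finset.filter_insert, if_neg (not_lt.2 (ha i hi).le)]
    rw [h1, h2, Finset.sum_congr rfl (fun i hi => by rw [h3 i hi, h4 i hi]), ih]
    ring

private lemma filter_le_eq_insert {ι : Type*} [DecidableEq ι] [LinearOrder ι]
    (C : Finset ι) (i : ι) (hi : i ∈ C) :
    C.filter (· ≤ i) = insert i (C.filter (· < i)) := by
  ext y
  simp only [Finset.mem_filter, Finset.mem_insert]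
  constructor
  · rintro ⟨hy, hle⟩
    rcases lt_or_eq_of_le hle with h | h
    · exact Or.inr ⟨hy, h⟩
    · exact Or.inl h
  · rintro (rfl | ⟨hy, hlt⟩)
    · exact ⟨hi, le_rfl⟩
    · exact ⟨hy, hlt.le⟩

private lemma exists_tight {ι : Type*} [DecidableEq ι] [LinearOrder ι] (f : Finset ι → ℝ)
    (hnorm : f ∅ = 0)
    (hmono : ∀ A B : Finset ι, A ⊆ B → f A ≤ f B)
    (hsub : ∀ A B : Finset ι, A ⊆ B → ∀ v ∉ B,
      f (insert v A) - f A ≥ f (insert v B) - f B)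
    (A : Finset ι) :
    ∃ x : ι → ℝ, (∀ i, 0 ≤ x i) ∧ (∀ B : Finset ι, ∑ i ∈ B, x i ≤ f B) ∧
      ∑ i ∈ A, x i = f A := by
  refine ⟨fun i => if i ∈ A then f (A.filter (· ≤ i)) - f (A.filter (· < i)) else 0, ?_, ?_, ?_⟩
  · intro i
    by_cases hi : i ∈ A
    · simp only [if_pos hi, sub_nonneg]
      exact hmono _ _ (Finset.monotone_filter_right _ (fun y _ hy => hy.le))
    · simp [hi]
  · intro B
    have hsubset : A ∩ B ⊆ B := Finset.inter_subset_right
    have hsum : ∑ i ∈ B, (if i ∈ A then f (A.filter (· ≤ i)) - f (A.filter (· < i)) else 0)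
        = ∑ i ∈ A ∩ B, (if i ∈ A then f (A.filter (· ≤ i)) - f (A.filter (· < i)) else 0) := by
      refine (Finset.sum_subset hsubset ?_).symm
      intro i hiB hni
      have : i ∉ A := fun hiA => hni (Finset.mem_inter.2 ⟨hiA, hiB⟩)
      simp [this]
    rw [hsum]
    have hbound : ∀ i ∈ A ∩ B,
        (if i ∈ A then f (A.filter (· ≤ i)) - f (A.filter (· < i)) else 0)
        ≤ f ((A ∩ B).filter (· ≤ i)) - f ((A ∩ B).filter (· < i)) := by
      intro i hi
      have hiA : i ∈ A := (Finset.mem_inter.1 hi).1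
      rw [if_pos hiA, filter_le_eq_insert A i hiA, filter_le_eq_insert (A ∩ B) i hi]
      have hss : (A ∩ B).filter (· < i) ⊆ A.filter (· < i) :=
        Finset.filter_subset_filter _ Finset.inter_subset_left
      have hv : i ∉ A.filter (· < i) := by simp
      exact hsub _ _ hss i hv
    calc ∑ i ∈ A ∩ B, (if i ∈ A then f (A.filter (· ≤ i)) - f (A.filter (· < i)) else 0)
        ≤ ∑ i ∈ A ∩ B, (f ((A ∩ B).filter (· ≤ i)) - f ((A ∩ B).filter (· < i))) :=
          Finset.sum_le_sum hbound
      _ = f (A ∩ B) - f ∅ := telescope_aux f (A ∩ B)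
      _ = f (A ∩ B) := by rw [hnorm]; ring
      _ ≤ f B := hmono _ _ hsubset
  · have : ∑ i ∈ A, (if i ∈ A then f (A.filter (· ≤ i)) - f (A.filter (· < i)) else 0)
        = ∑ i ∈ A, (f (A.filter (· ≤ i)) - f (A.filter (· < i))) :=
      Finset.sum_congr rfl (fun i hi => if_pos hi)
    rw [this, telescope_aux f A, hnorm]
    ring

/-- For a finite ground set `S` (modelled as a finite type `ι`), a normalized
monotone submodular function `f`, and any set function `g` whose polymatroid
equals `P_f`, we have `g A ≥ f A` for every `A ⊆ S`. -/
theorem ge_of_polymatroid_eq {ι : Type*} [Fintype ι] [DecidableEq ι]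
    (f g : Finset ι → ℝ)
    (hnorm : f ∅ = 0)
    (hmono : ∀ A B : Finset ι, A ⊆ B → f A ≤ f B)
    (hsub : ∀ A B : Finset ι, A ⊆ B → ∀ v ∉ B,
      f (insert v A) - f A ≥ f (insert v B) - f B)
    (hpoly : {x : ι → ℝ | (∀ i, 0 ≤ x i) ∧ ∀ B : Finset ι, ∑ i ∈ B, x i ≤ g B}
      = {x : ι → ℝ | (∀ i, 0 ≤ x i) ∧ ∀ B : Finset ι, ∑ i ∈ B, x i ≤ f B}) :
    ∀ A : Finset ι, g A ≥ f A := by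
  letI : LinearOrder ι := LinearOrder.lift' (Fintype.equivFin ι) (Fintype.equivFin ι).injective
  intro A
  obtain ⟨x, hx0, hxf, hxA⟩ := exists_tight f hnorm hmono hsub A
  have hxg : x ∈ {x : ι → ℝ | (∀ i, 0 ≤ x i) ∧ ∀ B : Finset ι, ∑ i ∈ B, x i ≤ g B} := by
    rw [hpoly]; exact ⟨hx0, hxf⟩
  calc f A = ∑ i ∈ A, x i := hxA.symm
    _ ≤ g A := hxg.2 A
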